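/- Let A be an associative unital ℂ-algebra, q ∈ ℂ with q ≠ 0, and let X₁, X₂ ∈ A satisfy the Temperley–Lieb relations X_i² = −(q + q⁻¹)X_i (i = 1,2), X₁X₂X₁ = X₁, X₂X₁X₂ = X₂. For u ∈ ℂ with u ≠ 0 define Ř₁(u) = ω(uq)·1 + ω(u)·X₁ and Ř₂(u) = ω(uq)·1 + ω(u)·X₂, where ω(z) = z − z⁻¹. Then for all nonzero u, v ∈ ℂ the Yang–Baxter equation Ř₁(u) Ř₂(uv) Ř₁(v) = Ř₂(v) Ř₁(uv) Ř₂(u) holds. -/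

import Mathlib

set_option maxHeartbeats 1000000 in
private lemma baxterized_key (q u v : ℂ) (hq : q ≠ 0) (hu : u ≠ 0) (hv : v ≠ 0) :
    (u*q - (u*q)⁻¹)*((u*v)*q - ((u*v)*q)⁻¹)*(v - v⁻¹)
      + (u - u⁻¹)*((u*v)*q - ((u*v)*q)⁻¹)*(v*q - (v*q)⁻¹)
      + (-(q+q⁻¹))*((u - u⁻¹)*((u*v)*q - ((u*v)*q)⁻¹)*(v - v⁻¹))
      + (u - u⁻¹)*(u*v - (u*v)⁻¹)*(v - v⁻¹)
    = (v*q - (v*q)⁻¹)*(u*v - (u*v)⁻¹)*(u*q - (u*q)⁻¹) := by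
  have huvq : u * v * q ≠ 0 := by simp [hu, hv, hq]
  have h1 : u * q * (u * v * q) * v ≠ 0 :=
    mul_ne_zero (mul_ne_zero (mul_ne_zero hu hq) huvq) hv
  have h2 : u * (u * v * q) * (v * q) ≠ 0 :=
    mul_ne_zero (mul_ne_zero hu huvq) (mul_ne_zero hv hq)
  have h3 : q * (u * (u * v * q) * v) ≠ 0 :=
    mul_ne_zero hq (mul_ne_zero (mul_ne_zero hu huvq) hv)
  field_simp
  have hD : u * q * (u * v * q) * v * (u * (u * v * q) * (v * q)) * (q * (u * (u * v * q) * v)) *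
      (u * (u * v) * v) ≠ 0 :=
    mul_ne_zero (mul_ne_zero (mul_ne_zero h1 h2) h3)
      (mul_ne_zero (mul_ne_zero hu (mul_ne_zero hu hv)) hv)
  ring

/-- Baxterization of Temperley–Lieb generators.  If `X₁, X₂` satisfy the
Temperley–Lieb relations and `Ř_i(u) = ω(uq)·1 + ω(u)·X_i` with `ω(z) = z - z⁻¹`, then
for all nonzero `u, v` the Yang–Baxter equation
`Ř₁(u) Ř₂(uv) Ř₁(v) = Ř₂(v) Ř₁(uv) Ř₂(u)` holds. -/
theorem baxterized_yang_baxter (A : Type*) [Ring A] [Algebra ℂ A]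
    (q : ℂ) (hq : q ≠ 0) (X₁ X₂ : A)
    (h1 : X₁ * X₁ = (-(q + q⁻¹)) • X₁) (h2 : X₂ * X₂ = (-(q + q⁻¹)) • X₂)
    (h121 : X₁ * X₂ * X₁ = X₁) (h212 : X₂ * X₁ * X₂ = X₂)
    (ω : ℂ → ℂ) (hω : ∀ z : ℂ, ω z = z - z⁻¹)
    (R₁ R₂ : ℂ → A)
    (hR₁ : ∀ u : ℂ, R₁ u = ω (u * q) • (1 : A) + ω u • X₁)
    (hR₂ : ∀ u : ℂ, R₂ u = ω (u * q) • (1 : A) + ω u • X₂) :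
    ∀ u v : ℂ, u ≠ 0 → v ≠ 0 →
      R₁ u * R₂ (u * v) * R₁ v = R₂ v * R₁ (u * v) * R₂ u := by
  intro u v hu hv
  have key1 : ω (u*q) * ω (u*v*q) * ω v + ω u * ω (u*v*q) * ω (v*q)
      + (-(q+q⁻¹)) * (ω u * ω (u*v*q) * ω v) + ω u * ω (u*v) * ω v
      = ω (v*q) * ω (u*v) * ω (u*q) := by
    simp only [hω]
    linear_combination baxterized_key q u v hq hu hv
  have key2 : ω (v*q) * ω (u*v*q) * ω u + ω v * ω (u*v*q) * ω (u*q)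
      + (-(q+q⁻¹)) * (ω v * ω (u*v*q) * ω u) + ω v * ω (u*v) * ω u
      = ω (u*q) * ω (u*v) * ω (v*q) := by
    simp only [hω]
    linear_combination baxterized_key q v u hq hv hu
  have hL : R₁ u * R₂ (u * v) * R₁ v
      = (ω (u*q) * ω (u*v*q) * ω (v*q)) • (1 : A)
        + (ω (u*q) * ω (u*v*q) * ω v + ω u * ω (u*v*q) * ω (v*q)
            + (-(q+q⁻¹)) * (ω u * ω (u*v*q) * ω v) + ω u * ω (u*v) * ω v) • X₁
        + (ω (u*q) * ω (u*v) * ω (v*q)) • X₂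
        + (ω u * ω (u*v) * ω (v*q)) • (X₁ * X₂)
        + (ω (u*q) * ω (u*v) * ω v) • (X₂ * X₁) := by
    simp only [hR₁, hR₂, add_mul, mul_add, smul_mul_assoc, mul_smul_comm, smul_smul,
      one_mul, mul_one, h1, h2, h121, h212]
    match_scalars <;> ring
  have hRR : R₂ v * R₁ (u * v) * R₂ u
      = (ω (u*q) * ω (u*v*q) * ω (v*q)) • (1 : A)
        + (ω (v*q) * ω (u*v) * ω (u*q)) • X₁
        + (ω (v*q) * ω (u*v*q) * ω u + ω v * ω (u*v*q) * ω (u*q)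
            + (-(q+q⁻¹)) * (ω v * ω (u*v*q) * ω u) + ω v * ω (u*v) * ω u) • X₂
        + (ω (v*q) * ω (u*v) * ω u) • (X₁ * X₂)
        + (ω v * ω (u*v) * ω (u*q)) • (X₂ * X₁) := by
    simp only [hR₁, hR₂, add_mul, mul_add, smul_mul_assoc, mul_smul_comm, smul_smul,
      one_mul, mul_one, h1, h2, h121, h212]
    match_scalars <;> ring
  rw [hL, hRR, key1, key2]
  match_scalars <;> ring
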